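/- Let λ ∈ k and let φ(x₁,x₂) = ⌊x₁⌋⌊x₂⌋ − ⌊x₁⌊x₂⌋⌋ − ⌊⌊x₁⌋x₂⌋ − λ·x₁x₂ be the modified Rota–Baxter OPI of weight λ. Let Z be a set and let ≤ be a monomial order on M(Z) such that lm(φ(u₁,u₂)) = ⌊u₁⌋⌊u₂⌋ for all u₁, u₂ ∈ M(Z). Then S_φ(Z) is a Gröbner–Shirshov basis in kM(Z) with respect to ≤; hence, whenever such a monomial order exists for every set Z, the modified Rota–Baxter OPI is Gröbner–Shirshov. -/

import Mathlib

namespace RotaGS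

/-- Bracketed words on `Z`: elements of the free operated monoid `M(Z)`.
A bracketed word is a (possibly empty) list of letters, each letter being either a
variable from `Z` or a bracketed word `⌊u⌋`. -/
inductive OpWord (Z : Type) : Type
  | one : OpWord Z
  | var : Z → OpWord Z → OpWord Z
  | brkCons : OpWord Z → OpWord Z → OpWord Z

namespace OpWord

variable {Z : Type}

/-- Concatenation (product) of bracketed words. -/
def mul : OpWord Z → OpWord Z → OpWord Z
  | one, w => w
  | var z u, w => var z (mul u w)
  | brkCons b u, w => brkCons b (mul u w)

instance : Mul (OpWord Z) := ⟨mul⟩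
instance : One (OpWord Z) := ⟨one⟩

/-- The operator `u ↦ ⌊u⌋`. -/
def brk (u : OpWord Z) : OpWord Z := brkCons u one

/-- Substitution of bracketed words for variables. -/
def substVar {Y : Type} (σ : Z → OpWord Y) : OpWord Z → OpWord Y
  | one => one
  | var z w => (σ z).mul (substVar σ w)
  | brkCons u w => brkCons (substVar σ u) (substVar σ w)

/-- The breadth `|f|` of a bracketed word. -/
def breadth : OpWord Z → ℕ
  | one => 0
  | var _ w => 1 + breadth w
  | brkCons _ w => 1 + breadth w

/-- Number of occurrences of the variable `x` in a bracketed word. -/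
def varCount [DecidableEq Z] (x : Z) : OpWord Z → ℕ
  | one => 0
  | var z w => (if z = x then 1 else 0) + varCount x w
  | brkCons u w => varCount x u + varCount x w

end OpWord

/-- `⋆`-bracketed words on `Z`: bracketed words on `Z ∪ {⋆}` with exactly one
occurrence of `⋆`. -/
inductive StarWord (Z : Type) : Type
  | star : StarWord Z
  | brk : StarWord Z → StarWord Z
  | mul : OpWord Z → StarWord Z → OpWord Z → StarWord Z

/-- `q|_u` : replace `⋆` in `q` by the bracketed word `u`. -/
def StarWord.subst {Z : Type} : StarWord Z → OpWord Z → OpWord Z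
  | .star, u => u
  | .brk q, u => OpWord.brk (q.subst u)
  | .mul a q b, u => a.mul ((q.subst u).mul b)

/-- The free `k`-module `kM(Z)` with basis the bracketed words `M(Z)`. -/
abbrev kM (k Z : Type) [Field k] : Type := OpWord Z →₀ k

/-- The linear extension `q|_s` of `u ↦ q|_u`. -/
noncomputable def StarWord.substF {k Z : Type} [Field k] (q : StarWord Z) (s : kM k Z) : kM k Z :=
  Finsupp.mapDomain q.subst s

/-- Substitution (evaluation) of an operated polynomial `φ ∈ kM(X)` along an
assignment `σ` of bracketed words to the variables. -/
noncomputable def substOPI {k X Z : Type} [Field k] (σ : X → OpWord Z) (φ : kM k X) : kM k Z :=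
  Finsupp.mapDomain (OpWord.substVar σ) φ

/-- Right multiplication `f · u` of `f ∈ kM(Z)` by a word `u`. -/
noncomputable def mulWordRight {k Z : Type} [Field k] (f : kM k Z) (u : OpWord Z) : kM k Z :=
  Finsupp.mapDomain (fun m => m.mul u) f

/-- Left multiplication `v · g` of `g ∈ kM(Z)` by a word `v`. -/
noncomputable def mulWordLeft {k Z : Type} [Field k] (v : OpWord Z) (g : kM k Z) : kM k Z :=
  Finsupp.mapDomain (fun m => v.mul m) g

/-- `lt` is a monomial order on `M(Z)`: a well-order such that `u < v` implies
`q|_u < q|_v` for every `⋆`-bracketed word `q`. -/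
structure IsMonomialOrder {Z : Type} (lt : OpWord Z → OpWord Z → Prop) : Prop where
  wellOrder : IsWellOrder (OpWord Z) lt
  compat : ∀ (q : StarWord Z) (u v : OpWord Z), lt u v → lt (q.subst u) (q.subst v)

/-- `w` is the leading monomial of `f` with respect to the strict order `lt`. -/
def IsLeadingMonomial {k Z : Type} [Field k] (lt : OpWord Z → OpWord Z → Prop)
    (f : kM k Z) (w : OpWord Z) : Prop :=
  w ∈ f.support ∧ ∀ w' ∈ f.support, w' ≠ w → lt w' w

/-- `S` is monicized with respect to `lt`: every `s ∈ S` has leading coefficient `1`. -/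
def Monicized {k Z : Type} [Field k] (lt : OpWord Z → OpWord Z → Prop)
    (S : Set (kM k Z)) : Prop :=
  ∀ s ∈ S, ∃ w, IsLeadingMonomial lt s w ∧ s w = 1

/-- `R(s)` for `s` oriented at the monomial `w`, after monicization:
`R(s) = w − (coefficient of w in s)⁻¹ • s`. -/
noncomputable def Rrem {k Z : Type} [Field k] (s : kM k Z) (w : OpWord Z) : kM k Z :=
  Finsupp.single w 1 - (s w)⁻¹ • s

section TRS

variable {k W : Type} [Field k]

/-- One-step rewriting for a term-rewriting system `R ⊆ W × kW` on the free module
with basis `W`: if `f = c·t + f'` with `c ≠ 0`, `t ∉ Supp f'` and `(t,v) ∈ R`,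
then `f` rewrites to `c·v + f'`. -/
def OneStep (R : Set (W × (W →₀ k))) (f g : W →₀ k) : Prop :=
  ∃ (c : k) (t : W) (v f' : W →₀ k),
    c ≠ 0 ∧ (t, v) ∈ R ∧ t ∉ f'.support ∧
    f = Finsupp.single t c + f' ∧ g = c • v + f'

/-- `f →* g`: reflexive-transitive closure of one-step rewriting. -/
def Rewrites (R : Set (W × (W →₀ k))) : (W →₀ k) → (W →₀ k) → Prop :=
  Relation.ReflTransGen (OneStep R)

/-- `f ↓ g`: joinability. -/
def Joinable (R : Set (W × (W →₀ k))) (f g : W →₀ k) : Prop :=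
  ∃ h, Rewrites R f h ∧ Rewrites R g h

/-- A term-rewriting system is simple if `t ∉ Supp v` for every rule `t → v`. -/
def SimpleTRS (R : Set (W × (W →₀ k))) : Prop := ∀ p ∈ R, p.1 ∉ p.2.support

/-- Terminating: no infinite chain of one-step rewritings. -/
def Terminating (R : Set (W × (W →₀ k))) : Prop :=
  ¬ ∃ seq : ℕ → (W →₀ k), ∀ n, OneStep R (seq n) (seq (n + 1))

/-- Confluent: every fork is joinable. -/
def Confluent (R : Set (W × (W →₀ k))) : Prop :=
  ∀ ⦃f g₁ g₂ : W →₀ k⦄, Rewrites R f g₁ → Rewrites R f g₂ → Joinable R g₁ g₂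

/-- Locally confluent: every local fork is joinable. -/
def LocallyConfluent (R : Set (W × (W →₀ k))) : Prop :=
  ∀ ⦃f g₁ g₂ : W →₀ k⦄, OneStep R f g₁ → OneStep R f g₂ → Joinable R g₁ g₂

/-- Convergent: terminating and confluent. -/
def ConvergentTRS (R : Set (W × (W →₀ k))) : Prop := Terminating R ∧ Confluent R

end TRS

/-- The term-rewriting system `Π_S` from the order `lt`:
rules `q|_{lm(s)} → q|_{R(s)}` for `s ∈ S`, `q ∈ M^⋆(Z)`. -/
def PiS {k Z : Type} [Field k] (lt : OpWord Z → OpWord Z → Prop) (S : Set (kM k Z)) :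
    Set (OpWord Z × kM k Z) :=
  { p | ∃ s ∈ S, ∃ w, IsLeadingMonomial lt s w ∧
        ∃ q : StarWord Z, p = (q.subst w, q.substF (Rrem s w)) }

/-- The term-rewriting system associated to `S` with respect to an
orientation `or` (a choice of a monomial `or s` for each `s ∈ S`). -/
def assocTRS {k Z : Type} [Field k] (S : Set (kM k Z)) (or : kM k Z → OpWord Z) :
    Set (OpWord Z × kM k Z) :=
  { p | ∃ s ∈ S, ∃ q : StarWord Z, p = (q.subst (or s), q.substF (Rrem s (or s))) }

/-- `or` is an orientation of `S`: it picks a monomial of each `s ∈ S`. -/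
def IsOrientation {k Z : Type} [Field k] (S : Set (kM k Z)) (or : kM k Z → OpWord Z) : Prop :=
  ∀ s ∈ S, or s ∈ s.support

/-- The operated ideal `Id(S)` generated by `S`:
`Id(S) = { Σᵢ cᵢ qᵢ|_{sᵢ} : cᵢ ∈ k, qᵢ ∈ M^⋆(Z), sᵢ ∈ S }`. -/
noncomputable def OpIdeal {k Z : Type} [Field k] (S : Set (kM k Z)) : Submodule k (kM k Z) :=
  Submodule.span k { x | ∃ s ∈ S, ∃ q : StarWord Z, x = q.substF s }

/-- `Irr(S) = M(Z) ∖ { q|_{lm(s)} : q ∈ M^⋆(Z), s ∈ S }`. -/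
def IrrSet {k Z : Type} [Field k] (lt : OpWord Z → OpWord Z → Prop) (S : Set (kM k Z)) :
    Set (OpWord Z) :=
  { w | ¬ ∃ s ∈ S, ∃ ws, IsLeadingMonomial lt s ws ∧ ∃ q : StarWord Z, w = q.subst ws }

/-- The `k`-linear span of a set of bracketed words inside `kM(Z)`. -/
noncomputable def spanSet (k : Type) [Field k] {Z : Type} (T : Set (OpWord Z)) : Submodule k (kM k Z) :=
  Submodule.span k ((fun w => Finsupp.single w (1 : k)) '' T)

/-- `h` is trivial modulo `(S, w)`: `h = Σᵢ cᵢ qᵢ|_{sᵢ}` with `qᵢ|_{lm(sᵢ)} < w`. -/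
def TrivialMod {k Z : Type} [Field k] (lt : OpWord Z → OpWord Z → Prop)
    (S : Set (kM k Z)) (w : OpWord Z) (h : kM k Z) : Prop :=
  ∃ (n : ℕ) (c : Fin n → k) (q : Fin n → StarWord Z) (s : Fin n → kM k Z),
    (∀ i, s i ∈ S) ∧
    (∀ i, ∃ wi, IsLeadingMonomial lt (s i) wi ∧ lt ((q i).subst wi) w) ∧
    h = ∑ i, c i • (q i).substF (s i)

/-- The monicization of `S` with respect to `lt`. -/
def MonicVersion {k Z : Type} [Field k] (lt : OpWord Z → OpWord Z → Prop)
    (S : Set (kM k Z)) : Set (kM k Z) :=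
  { f | ∃ s ∈ S, ∃ w, IsLeadingMonomial lt s w ∧ f = (s w)⁻¹ • s }

/-- `S` is a Gröbner–Shirshov basis in `kM(Z)` with respect to `lt`: after
monicization, every intersection composition and every including composition of
pairs of elements of `S` is trivial modulo `(S, w)`. -/
def IsGSBasis {k Z : Type} [Field k] (lt : OpWord Z → OpWord Z → Prop)
    (S : Set (kM k Z)) : Prop :=
  (∀ f ∈ MonicVersion lt S, ∀ g ∈ MonicVersion lt S,
    ∀ (wf wg u v w : OpWord Z),
      IsLeadingMonomial lt f wf → IsLeadingMonomial lt g wg →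
      w = wf.mul u → w = v.mul wg →
      max wf.breadth wg.breadth < w.breadth →
      w.breadth < wf.breadth + wg.breadth →
      TrivialMod lt (MonicVersion lt S) w (mulWordRight f u - mulWordLeft v g)) ∧
  (∀ f ∈ MonicVersion lt S, ∀ g ∈ MonicVersion lt S,
    ∀ (wf wg : OpWord Z) (q : StarWord Z),
      IsLeadingMonomial lt f wf → IsLeadingMonomial lt g wg →
      wf = q.subst wg →
      TrivialMod lt (MonicVersion lt S) wf (f - q.substF g))

/-- `S_Φ(Z)`: all substitution instances in `kM(Z)` of OPIs from `Φ ⊆ kM(X)`. -/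
def SPhi {k X : Type} [Field k] (Φ : Set (kM k X)) (Z : Type) : Set (kM k Z) :=
  { f | ∃ φ ∈ Φ, ∃ σ : X → OpWord Z, f = substOPI σ φ }

/-- A system of OPIs `Φ` is Gröbner–Shirshov if for every set `Z` there is a
monomial order on `M(Z)` making `S_Φ(Z)` a Gröbner–Shirshov basis. -/
def GSOPI {k X : Type} [Field k] (Φ : Set (kM k X)) : Prop :=
  ∀ Z : Type, ∃ lt : OpWord Z → OpWord Z → Prop,
    IsMonomialOrder lt ∧ IsGSBasis lt (SPhi Φ Z)

/-- A system of OPIs `Φ` is convergent if for every set `Z` there is an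
orientation of `S_Φ(Z)` whose associated term-rewriting system is convergent. -/
def ConvergentOPI {k X : Type} [Field k] (Φ : Set (kM k X)) : Prop :=
  ∀ Z : Type, ∃ or : kM k Z → OpWord Z,
    IsOrientation (SPhi Φ Z) or ∧ ConvergentTRS (assocTRS (SPhi Φ Z) or)

/-- The first variable `x₁`. -/
def x1 : OpWord (Fin 2) := OpWord.var 0 OpWord.one

/-- The second variable `x₂`. -/
def x2 : OpWord (Fin 2) := OpWord.var 1 OpWord.one

/-- The averaging OPI `φ₁ = ⌊x₁⌋⌊x₂⌋ − ⌊⌊x₁⌋x₂⌋`. -/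
noncomputable def phi1 (k : Type) [Field k] : kM k (Fin 2) :=
  Finsupp.single ((OpWord.brk x1).mul (OpWord.brk x2)) 1
    - Finsupp.single (OpWord.brk ((OpWord.brk x1).mul x2)) 1

/-- The averaging OPI `φ₂ = ⌊x₁⌊x₂⌋⌋ − ⌊⌊x₁⌋x₂⌋`. -/
noncomputable def phi2 (k : Type) [Field k] : kM k (Fin 2) :=
  Finsupp.single (OpWord.brk (x1.mul (OpWord.brk x2))) 1
    - Finsupp.single (OpWord.brk ((OpWord.brk x1).mul x2)) 1

end RotaGS

namespace RotaGS

/-- The modified Rota–Baxter OPI of weight `λ`: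
`φ(x₁,x₂) = ⌊x₁⌋⌊x₂⌋ − ⌊x₁⌊x₂⌋⌋ − ⌊⌊x₁⌋x₂⌋ − λ·x₁x₂`. -/
noncomputable def mrbPhi (k : Type) [Field k] (lam : k) : kM k (Fin 2) :=
  Finsupp.single ((OpWord.brk x1).mul (OpWord.brk x2)) 1
    - Finsupp.single (OpWord.brk (x1.mul (OpWord.brk x2))) 1
    - Finsupp.single (OpWord.brk ((OpWord.brk x1).mul x2)) 1
    - lam • Finsupp.single (x1.mul x2) 1


namespace OpWord

variable {Z : Type}

@[simp] lemma one_mul' (w : OpWord Z) : mul one w = w := rfl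
@[simp] lemma var_mul (z : Z) (u w : OpWord Z) : mul (var z u) w = var z (mul u w) := rfl
@[simp] lemma brkCons_mul (b u w : OpWord Z) : mul (brkCons b u) w = brkCons b (mul u w) := rfl
@[simp] lemma mul_one' (w : OpWord Z) : mul w one = w := by
  induction w <;> simp [mul, *]
@[simp] lemma mul_assoc' (u v w : OpWord Z) : mul (mul u v) w = mul u (mul v w) := by
  induction u <;> simp [mul, *]

/-- auxiliary size -/
def sz : OpWord Z → ℕ
  | one => 0
  | var _ w => 1 + sz w
  | brkCons u w => 1 + sz u + sz w

@[simp] lemma sz_mul (u v : OpWord Z) : sz (mul u v) = sz u + sz v := by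
  induction u <;> simp [sz, mul, *] <;> omega

lemma mul_eq_one {u v : OpWord Z} (h : mul u v = one) : u = one ∧ v = one := by
  cases u with
  | one => exact ⟨rfl, h⟩
  | var z w => simp at h
  | brkCons a w => simp at h

@[simp] lemma breadth_mul (u v : OpWord Z) : breadth (mul u v) = breadth u + breadth v := by
  induction u <;> simp [breadth, mul, *] <;> omega

lemma eq_one_of_breadth_eq_zero {u : OpWord Z} (h : breadth u = 0) : u = one := by
  cases u <;> simp [breadth] at h ⊢ <;> omega

end OpWord

variable {Z : Type}

lemma subst_ne_one (q : StarWord Z) {u : OpWord Z} (hu : u ≠ OpWord.one) :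
    q.subst u ≠ OpWord.one := by
  induction q with
  | star => exact hu
  | brk q ih => simp [StarWord.subst, OpWord.brk]
  | mul a q b ih =>
      simp only [StarWord.subst]
      intro hcon
      exact ih (OpWord.mul_eq_one (OpWord.mul_eq_one hcon).2).1

/-- number of star-word constructors above the star -/
def msize : StarWord Z → ℕ
  | .star => 0
  | .brk q => 1 + msize q
  | .mul _ q _ => 1 + msize q

/-- Position lemma: if `q|_W` is a two letter word `⌊a⌋⌊b⌋` (with `W` of breadth ≥ 2),
then `q` is the identity context, or the star lies inside `a`, or inside `b`. -/
lemma position : ∀ (n : ℕ) (q : StarWord Z), msize q ≤ n →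
    ∀ (a b w1 w2 w3 : OpWord Z),
    q.subst (OpWord.brkCons w1 (OpWord.brkCons w2 w3)) = OpWord.brkCons a (OpWord.brkCons b OpWord.one) →
    (∀ x, q.subst x = x) ∨
    (∃ p : StarWord Z, ∀ x, q.subst x = OpWord.brkCons (p.subst x) (OpWord.brkCons b OpWord.one)) ∨
    (∃ p : StarWord Z, ∀ x, q.subst x = OpWord.brkCons a (OpWord.brkCons (p.subst x) OpWord.one)) := by
  intro n
  induction n with
  | zero =>
      intro q hq
      cases q with
      | star => intro a b w1 w2 w3 _; exact Or.inl (fun x => rfl)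
      | brk q => simp [msize] at hq
      | mul u q v => simp [msize] at hq
  | succ n ih =>
      intro q hq a b w1 w2 w3 H
      cases q with
      | star => exact Or.inl (fun x => rfl)
      | brk q => simp [StarWord.subst, OpWord.brk] at H
      | mul u q' v =>
        simp only [StarWord.subst] at H
        cases u with
        | var z u0 => simp at H
        | one =>
          simp only [OpWord.one_mul'] at H
          cases q' with
          | star =>
            -- W.mul v = ⌊a⌋⌊b⌋
            simp only [StarWord.subst, OpWord.brkCons_mul] at H
            injection H with e1 e2
            injection e2 with e3 e4
            obtain ⟨hw3, hv⟩ := OpWord.mul_eq_one e4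
            subst hv
            exact Or.inl (fun x => by simp [StarWord.subst])
          | brk q'' =>
            simp only [StarWord.subst, OpWord.brk, OpWord.brkCons_mul, OpWord.one_mul'] at H
            injection H with e1 e2
            subst e2
            exact Or.inr (Or.inl ⟨q'', fun x => by simp [StarWord.subst, OpWord.brk]⟩)
          | mul u' q'' v' =>
            have hsz : msize (StarWord.mul u' q'' (v'.mul v)) ≤ n := by
              simp [msize] at hq ⊢; omega
            have hext : ∀ x, (StarWord.mul (OpWord.one) (StarWord.mul u' q'' v') v).subst x
                = (StarWord.mul u' q'' (v'.mul v)).subst x := by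
              intro x; simp [StarWord.subst]
            have H' : (StarWord.mul u' q'' (v'.mul v)).subst
                (OpWord.brkCons w1 (OpWord.brkCons w2 w3)) = OpWord.brkCons a (OpWord.brkCons b OpWord.one) := by
              rw [← hext]; simpa [StarWord.subst] using H
            rcases ih _ hsz a b w1 w2 w3 H' with h | ⟨p, hp⟩ | ⟨p, hp⟩
            · exact Or.inl (fun x => by rw [hext x]; exact h x)
            · exact Or.inr (Or.inl ⟨p, fun x => by rw [hext x]; exact hp x⟩)
            · exact Or.inr (Or.inr ⟨p, fun x => by rw [hext x]; exact hp x⟩)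
        | brkCons a0 u0 =>
          simp only [OpWord.brkCons_mul] at H
          injection H with e1 e2
          cases e1
          cases u0 with
          | var z u1 => simp at e2
          | brkCons b0 u1 =>
            simp only [OpWord.brkCons_mul] at e2
            injection e2 with e3 e4
            exact absurd (OpWord.mul_eq_one (OpWord.mul_eq_one e4).2).1
              (subst_ne_one q' (by simp))
          | one =>
            simp only [OpWord.one_mul'] at e2
            cases q' with
            | star =>
              simp only [StarWord.subst, OpWord.brkCons_mul] at e2
              injection e2 with e3 e4
              simp at e4
            | brk q'' =>
              simp only [StarWord.subst, OpWord.brk, OpWord.brkCons_mul, OpWord.one_mul'] at e2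
              injection e2 with e3 e4
              subst e4
              exact Or.inr (Or.inr ⟨q'', fun x => by simp [StarWord.subst, OpWord.brk]⟩)
            | mul u' q'' v' =>
              have hsz : msize (StarWord.mul ((OpWord.brkCons a OpWord.one).mul u') q'' (v'.mul v)) ≤ n := by
                simp [msize] at hq ⊢; omega
              have hext : ∀ x, (StarWord.mul (OpWord.brkCons a OpWord.one) (StarWord.mul u' q'' v') v).subst x
                  = (StarWord.mul ((OpWord.brkCons a OpWord.one).mul u') q'' (v'.mul v)).subst x := by
                intro x; simp [StarWord.subst]
              have H' := ih _ hsz a b w1 w2 w3 (by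
                simp only [StarWord.subst, OpWord.mul_assoc'] at e2 ⊢
                simp only [StarWord.subst, OpWord.brkCons_mul, OpWord.one_mul', OpWord.mul_assoc']
                rw [e2])
              rcases H' with h | ⟨p, hp⟩ | ⟨p, hp⟩
              · exact Or.inl (fun x => by rw [hext x]; exact h x)
              · exact Or.inr (Or.inl ⟨p, fun x => by rw [hext x]; exact hp x⟩)
              · exact Or.inr (Or.inr ⟨p, fun x => by rw [hext x]; exact hp x⟩)

end RotaGS

namespace RotaGS

variable {k : Type} [Field k] {Z : Type}

/-- `⌊u⌋⌊v⌋` -/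
def Aw (u v : OpWord Z) : OpWord Z := .brkCons u (.brkCons v .one)
/-- `⌊u⌊v⌋⌋` -/
def Bw (u v : OpWord Z) : OpWord Z := .brkCons (u.mul (.brkCons v .one)) .one
/-- `⌊⌊u⌋v⌋` -/
def Cw (u v : OpWord Z) : OpWord Z := .brkCons (.brkCons u v) .one
/-- `uv` -/
def Dw (u v : OpWord Z) : OpWord Z := u.mul v

noncomputable def phiI (lam : k) (u v : OpWord Z) : kM k Z := substOPI ![u, v] (mrbPhi k lam)

lemma brk_mul_brk (u v : OpWord Z) : (OpWord.brk u).mul (OpWord.brk v) = Aw u v := by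
  simp [OpWord.brk, Aw]

lemma mapDomain_sub {α β : Type} (f : α → β) (a b : α →₀ k) :
    Finsupp.mapDomain f (a - b) = Finsupp.mapDomain f a - Finsupp.mapDomain f b :=
  (Finsupp.mapDomain.addMonoidHom f).map_sub a b

lemma phiI_eq (lam : k) (u v : OpWord Z) :
    phiI lam u v = Finsupp.single (Aw u v) 1 - Finsupp.single (Bw u v) 1
      - Finsupp.single (Cw u v) 1 - lam • Finsupp.single (Dw u v) 1 := by
  rw [phiI, substOPI, mrbPhi, mapDomain_sub, mapDomain_sub, mapDomain_sub,
    Finsupp.mapDomain_smul, Finsupp.mapDomain_single, Finsupp.mapDomain_single,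
    Finsupp.mapDomain_single, Finsupp.mapDomain_single]
  congr 2
  · congr 2
    · congr 2
      · simp [x1, x2, OpWord.brk, OpWord.substVar, Aw]
    · simp [x1, x2, OpWord.brk, OpWord.substVar, Bw]
  · simp [x1, x2, OpWord.brk, OpWord.substVar, Cw]
  · simp [x1, x2, OpWord.substVar, Dw]

lemma ne_BA (u v : OpWord Z) : Bw u v ≠ Aw u v := by simp [Aw, Bw]
lemma ne_CA (u v : OpWord Z) : Cw u v ≠ Aw u v := by simp [Aw, Cw]
lemma ne_DA (u v : OpWord Z) : Dw u v ≠ Aw u v := by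
  intro h
  have := congrArg OpWord.sz h
  simp [Dw, Aw, OpWord.sz] at this
  omega
lemma ne_DB (u v : OpWord Z) : Dw u v ≠ Bw u v := by
  intro h
  have := congrArg OpWord.sz h
  simp [Dw, Bw, OpWord.sz] at this
  omega
lemma ne_DC (u v : OpWord Z) : Dw u v ≠ Cw u v := by
  intro h
  have := congrArg OpWord.sz h
  simp [Dw, Cw, OpWord.sz] at this
  omega
lemma ne_CB {u v : OpWord Z} (hne : ¬(u = OpWord.one ∧ v = OpWord.one)) :
    Cw u v ≠ Bw u v := by
  intro h
  rw [Cw, Bw] at h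
  injection h with h1 _
  cases u with
  | one =>
      simp only [OpWord.one_mul'] at h1
      injection h1 with h2 h3
      exact hne ⟨rfl, h2.symm⟩
  | var z w => simp at h1
  | brkCons x t =>
      simp only [OpWord.brkCons_mul] at h1
      injection h1 with h2 _
      have := congrArg OpWord.sz h2
      simp [OpWord.sz] at this
      omega

lemma eq_CB_one : Cw (OpWord.one : OpWord Z) OpWord.one = Bw OpWord.one OpWord.one := by
  simp [Cw, Bw]

lemma phiI_apply_A (lam : k) (u v : OpWord Z) : (phiI lam u v) (Aw u v) = 1 := by
  rw [phiI_eq]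
  simp [Finsupp.single_apply, ne_BA u v, ne_CA u v, ne_DA u v]

lemma phiI_apply_B (lam : k) {u v : OpWord Z} (hne : ¬(u = OpWord.one ∧ v = OpWord.one)) :
    (phiI lam u v) (Bw u v) = -1 := by
  rw [phiI_eq]
  simp [Finsupp.single_apply, (ne_BA u v).symm, ne_CB hne, ne_DB u v]

lemma phiI_apply_C (lam : k) {u v : OpWord Z} (hne : ¬(u = OpWord.one ∧ v = OpWord.one)) :
    (phiI lam u v) (Cw u v) = -1 := by
  rw [phiI_eq]
  simp [Finsupp.single_apply, (ne_CA u v).symm, (ne_CB hne).symm, ne_DC u v]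

lemma phiI_apply_D (lam : k) (u v : OpWord Z) : (phiI lam u v) (Dw u v) = -lam := by
  rw [phiI_eq]
  simp [Finsupp.single_apply, (ne_DA u v).symm, (ne_DB u v).symm, (ne_DC u v).symm]

lemma phiI_apply_B11 (lam : k) :
    (phiI lam (OpWord.one : OpWord Z) OpWord.one) (Bw OpWord.one OpWord.one) = -(1+1) := by
  rw [phiI_eq]
  simp [Finsupp.single_apply, (ne_BA (OpWord.one : OpWord Z) OpWord.one).symm, eq_CB_one,
    ne_DB (OpWord.one : OpWord Z) OpWord.one]
  ring

section Order

variable (lam : k) {lt : OpWord Z → OpWord Z → Prop} (hmo : IsMonomialOrder lt)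
variable (hlm : ∀ u₁ u₂ : OpWord Z,
      IsLeadingMonomial lt (substOPI ![u₁, u₂] (mrbPhi k lam))
        ((OpWord.brk u₁).mul (OpWord.brk u₂)))

include hlm in
lemma hlmA : ∀ u v : OpWord Z, IsLeadingMonomial lt (phiI lam u v) (Aw u v) := by
  intro u v
  have := hlm u v
  rwa [brk_mul_brk] at this

include hmo in
lemma lm_unique {s : kM k Z} {w w' : OpWord Z}
    (h1 : IsLeadingMonomial lt s w) (h2 : IsLeadingMonomial lt s w') : w = w' := by
  by_contra hne
  exact hmo.wellOrder.toIsWellFounded.wf.asymmetric _ _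
    (h2.2 w h1.1 hne) (h1.2 w' h2.1 (Ne.symm hne))

include hlm in
lemma ltB {u v : OpWord Z} (hne : ¬(u = OpWord.one ∧ v = OpWord.one)) :
    lt (Bw u v) (Aw u v) := by
  refine (hlmA lam hlm u v).2 _ ?_ (ne_BA u v)
  rw [Finsupp.mem_support_iff, phiI_apply_B lam hne]
  simp

include hlm in
lemma ltC {u v : OpWord Z} (hne : ¬(u = OpWord.one ∧ v = OpWord.one)) :
    lt (Cw u v) (Aw u v) := by
  refine (hlmA lam hlm u v).2 _ ?_ (ne_CA u v)
  rw [Finsupp.mem_support_iff, phiI_apply_C lam hne]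
  simp

include hlm in
lemma ltD {u v : OpWord Z} (hlam : lam ≠ 0) : lt (Dw u v) (Aw u v) := by
  refine (hlmA lam hlm u v).2 _ ?_ (ne_DA u v)
  rw [Finsupp.mem_support_iff, phiI_apply_D lam]
  simpa using hlam

include hlm in
lemma ltB2 {u v : OpWord Z} (h11 : lt (Bw (OpWord.one : OpWord Z) OpWord.one) (Aw OpWord.one OpWord.one)) :
    lt (Bw u v) (Aw u v) := by
  by_cases hne : u = OpWord.one ∧ v = OpWord.one
  · obtain ⟨rfl, rfl⟩ := hne; exact h11
  · exact ltB lam hlm hne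

include hlm in
lemma ltC2 {u v : OpWord Z} (h11 : lt (Bw (OpWord.one : OpWord Z) OpWord.one) (Aw OpWord.one OpWord.one)) :
    lt (Cw u v) (Aw u v) := by
  by_cases hne : u = OpWord.one ∧ v = OpWord.one
  · obtain ⟨rfl, rfl⟩ := hne; rw [eq_CB_one]; exact h11
  · exact ltC lam hlm hne

lemma mem_SPhi_iff {f : kM k Z} : f ∈ SPhi ({mrbPhi k lam} : Set (kM k (Fin 2))) Z ↔
    ∃ a b, f = phiI lam a b := by
  constructor
  · rintro ⟨φ, hφ, σ, rfl⟩
    rw [Set.mem_singleton_iff] at hφ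
    subst hφ
    refine ⟨σ 0, σ 1, ?_⟩
    rw [phiI]
    congr 1
    funext i
    fin_cases i <;> simp
  · rintro ⟨a, b, rfl⟩
    exact ⟨mrbPhi k lam, Set.mem_singleton _, ![a, b], rfl⟩

include hmo hlm in
lemma monic_eq : MonicVersion lt (SPhi ({mrbPhi k lam} : Set (kM k (Fin 2))) Z)
    = SPhi ({mrbPhi k lam} : Set (kM k (Fin 2))) Z := by
  ext f
  constructor
  · rintro ⟨s, hs, w, hw, rfl⟩
    obtain ⟨a, b, rfl⟩ := (mem_SPhi_iff lam).1 hs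
    have : w = Aw a b := lm_unique hmo hw (hlmA lam hlm a b)
    subst this
    rw [phiI_apply_A]
    simpa using hs
  · intro hs
    obtain ⟨a, b, rfl⟩ := (mem_SPhi_iff lam).1 hs
    refine ⟨phiI lam a b, hs, Aw a b, hlmA lam hlm a b, ?_⟩
    rw [phiI_apply_A]
    simp

end Order

section TrivMachinery

variable {lt : OpWord Z → OpWord Z → Prop} {S : Set (kM k Z)} {w : OpWord Z}

lemma trivialMod_zero : TrivialMod lt S w 0 :=
  ⟨0, Fin.elim0, Fin.elim0, Fin.elim0, fun i => i.elim0, fun i => i.elim0, by simp⟩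

lemma trivialMod_congr {x y : kM k Z} (hxy : x = y) (h : TrivialMod lt S w x) :
    TrivialMod lt S w y := hxy ▸ h

lemma trivialMod_add {x y : kM k Z} (h1 : TrivialMod lt S w x) (h2 : TrivialMod lt S w y) :
    TrivialMod lt S w (x + y) := by
  obtain ⟨n1, c1, q1, s1, hs1, hl1, he1⟩ := h1
  obtain ⟨n2, c2, q2, s2, hs2, hl2, he2⟩ := h2
  refine ⟨n1 + n2, Fin.append c1 c2, Fin.append q1 q2, Fin.append s1 s2, ?_, ?_, ?_⟩
  · intro i
    refine Fin.addCases (fun j => ?_) (fun j => ?_) i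
    · simpa [Fin.append_left] using hs1 j
    · simpa [Fin.append_right] using hs2 j
  · intro i
    refine Fin.addCases (fun j => ?_) (fun j => ?_) i
    · simpa [Fin.append_left] using hl1 j
    · simpa [Fin.append_right] using hl2 j
  · rw [he1, he2, Fin.sum_univ_add]
    congr 1
    · exact Finset.sum_congr rfl (fun j _ => by simp [Fin.append_left])
    · exact Finset.sum_congr rfl (fun j _ => by simp [Fin.append_right])

lemma trivialMod_term (c : k) (q : StarWord Z) (s : kM k Z) (ws : OpWord Z)
    (hs : s ∈ S) (hw : IsLeadingMonomial lt s ws) (hlt : c ≠ 0 → lt (q.subst ws) w) :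
    TrivialMod lt S w (c • q.substF s) := by
  by_cases hc : c = 0
  · subst hc
    exact trivialMod_congr (by simp) trivialMod_zero
  · exact ⟨1, fun _ => c, fun _ => q, fun _ => s, fun _ => hs,
      fun _ => ⟨ws, hw, hlt hc⟩, by simp⟩

end TrivMachinery

lemma star_substF (s : kM k Z) : StarWord.substF .star s = s := by
  rw [StarWord.substF, show (StarWord.subst (Z := Z) .star) = id from funext fun u => rfl,
    Finsupp.mapDomain_id]

lemma substF_phiI (lam : k) (q : StarWord Z) (u v : OpWord Z) :
    q.substF (phiI lam u v) = Finsupp.single (q.subst (Aw u v)) 1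
      - Finsupp.single (q.subst (Bw u v)) 1 - Finsupp.single (q.subst (Cw u v)) 1
      - lam • Finsupp.single (q.subst (Dw u v)) 1 := by
  rw [phiI_eq, StarWord.substF, mapDomain_sub, mapDomain_sub, mapDomain_sub,
    Finsupp.mapDomain_smul, Finsupp.mapDomain_single, Finsupp.mapDomain_single,
    Finsupp.mapDomain_single, Finsupp.mapDomain_single]

lemma mulWordRight_phiI (lam : k) (u v c : OpWord Z) :
    mulWordRight (phiI lam u v) c = Finsupp.single ((Aw u v).mul c) 1
      - Finsupp.single ((Bw u v).mul c) 1 - Finsupp.single ((Cw u v).mul c) 1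
      - lam • Finsupp.single ((Dw u v).mul c) 1 := by
  rw [phiI_eq, mulWordRight, mapDomain_sub, mapDomain_sub, mapDomain_sub,
    Finsupp.mapDomain_smul, Finsupp.mapDomain_single, Finsupp.mapDomain_single,
    Finsupp.mapDomain_single, Finsupp.mapDomain_single]

lemma mulWordLeft_phiI (lam : k) (u v a : OpWord Z) :
    mulWordLeft a (phiI lam u v) = Finsupp.single (a.mul (Aw u v)) 1
      - Finsupp.single (a.mul (Bw u v)) 1 - Finsupp.single (a.mul (Cw u v)) 1
      - lam • Finsupp.single (a.mul (Dw u v)) 1 := by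
  rw [phiI_eq, mulWordLeft, mapDomain_sub, mapDomain_sub, mapDomain_sub,
    Finsupp.mapDomain_smul, Finsupp.mapDomain_single, Finsupp.mapDomain_single,
    Finsupp.mapDomain_single, Finsupp.mapDomain_single]

end RotaGS

namespace RotaGS

variable {k : Type} [Field k] {Z : Type}

/-- simp set for word normalization -/
lemma interGeneric_id (lam : k) (a b c : OpWord Z) :
    mulWordRight (phiI lam a b) (.brkCons c .one)
      - mulWordLeft (.brkCons a .one) (phiI lam b c)
    = (-1 : k) • StarWord.substF .star (phiI lam (a.mul (.brkCons b .one)) c)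
    + (-1 : k) • StarWord.substF .star (phiI lam (.brkCons a b) c)
    + (1 : k) • StarWord.substF .star (phiI lam a (b.mul (.brkCons c .one)))
    + (1 : k) • StarWord.substF .star (phiI lam a (.brkCons b c))
    + (1 : k) • StarWord.substF (StarWord.brk (.mul .one .star c)) (phiI lam a b)
    + (-1 : k) • StarWord.substF (StarWord.brk (.mul a .star .one)) (phiI lam b c) := by
  rw [mulWordRight_phiI, mulWordLeft_phiI, star_substF, star_substF, star_substF, star_substF,
    substF_phiI, substF_phiI, phiI_eq, phiI_eq, phiI_eq, phiI_eq]
  simp only [StarWord.subst, OpWord.brk, Aw, Bw, Cw, Dw, OpWord.brkCons_mul, OpWord.one_mul',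
    OpWord.mul_one', OpWord.mul_assoc']
  module

section Inter

variable (lam : k) {lt : OpWord Z → OpWord Z → Prop} (hmo : IsMonomialOrder lt)
variable (hlm : ∀ u₁ u₂ : OpWord Z,
      IsLeadingMonomial lt (substOPI ![u₁, u₂] (mrbPhi k lam))
        ((OpWord.brk u₁).mul (OpWord.brk u₂)))

lemma phiI_mem : phiI lam u v ∈ SPhi ({mrbPhi k lam} : Set (kM k (Fin 2))) Z :=
  (mem_SPhi_iff lam).2 ⟨u, v, rfl⟩

include hmo hlm in
/-- generic intersection composition triviality -/
lemma interGeneric_triv (a b c : OpWord Z)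
    (hBab : lt (Bw a b) (Aw a b)) (hCab : lt (Cw a b) (Aw a b))
    (hBbc : lt (Bw b c) (Aw b c)) (hCbc : lt (Cw b c) (Aw b c)) :
    TrivialMod lt (SPhi ({mrbPhi k lam} : Set (kM k (Fin 2))) Z)
      (.brkCons a (.brkCons b (.brkCons c .one)))
      (mulWordRight (phiI lam a b) (.brkCons c .one)
        - mulWordLeft (.brkCons a .one) (phiI lam b c)) := by
  have htr : ∀ {x y z : OpWord Z}, lt x y → lt y z → lt x z :=
    fun hxy hyz => (by haveI := hmo.wellOrder; exact IsTrans.trans _ _ _ hxy hyz)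
  have i1 : lt (.brkCons (a.mul (.brkCons b .one)) (.brkCons c .one))
      (.brkCons a (.brkCons b (.brkCons c .one))) := by
    have := hmo.compat (StarWord.mul .one .star (.brkCons c .one)) _ _ hBab
    simpa [StarWord.subst, Aw, Bw] using this
  have i2 : lt (.brkCons (.brkCons a b) (.brkCons c .one))
      (.brkCons a (.brkCons b (.brkCons c .one))) := by
    have := hmo.compat (StarWord.mul .one .star (.brkCons c .one)) _ _ hCab
    simpa [StarWord.subst, Aw, Cw] using this
  have i3 : lt (.brkCons a (.brkCons (b.mul (.brkCons c .one)) .one))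
      (.brkCons a (.brkCons b (.brkCons c .one))) := by
    have := hmo.compat (StarWord.mul (.brkCons a .one) .star .one) _ _ hBbc
    simpa [StarWord.subst, Aw, Bw] using this
  have i4 : lt (.brkCons a (.brkCons (.brkCons b c) .one))
      (.brkCons a (.brkCons b (.brkCons c .one))) := by
    have := hmo.compat (StarWord.mul (.brkCons a .one) .star .one) _ _ hCbc
    simpa [StarWord.subst, Aw, Cw] using this
  have i5 : lt (.brkCons (.brkCons a (.brkCons b c)) .one)
      (.brkCons a (.brkCons b (.brkCons c .one))) := by
    refine htr ?_ i4
    have := ltC lam hlm (u := a) (v := .brkCons b c) (by simp)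
    simpa [Aw, Cw] using this
  have i6 : lt (.brkCons (a.mul (.brkCons b (.brkCons c .one))) .one)
      (.brkCons a (.brkCons b (.brkCons c .one))) := by
    refine htr ?_ i1
    have := ltB lam hlm (u := a.mul (.brkCons b .one)) (v := c) (by
      rintro ⟨h1, -⟩
      have := (OpWord.mul_eq_one h1).2
      simp at this)
    simpa [Aw, Bw] using this
  refine trivialMod_congr (interGeneric_id lam a b c).symm ?_
  refine trivialMod_add (trivialMod_add (trivialMod_add (trivialMod_add (trivialMod_add
    ?_ ?_) ?_) ?_) ?_) ?_
  · exact trivialMod_term _ _ _ _ (phiI_mem lam) (hlmA lam hlm _ _)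
      (fun _ => by simpa [StarWord.subst, Aw] using i1)
  · exact trivialMod_term _ _ _ _ (phiI_mem lam) (hlmA lam hlm _ _)
      (fun _ => by simpa [StarWord.subst, Aw] using i2)
  · exact trivialMod_term _ _ _ _ (phiI_mem lam) (hlmA lam hlm _ _)
      (fun _ => by simpa [StarWord.subst, Aw] using i3)
  · exact trivialMod_term _ _ _ _ (phiI_mem lam) (hlmA lam hlm _ _)
      (fun _ => by simpa [StarWord.subst, Aw] using i4)
  · exact trivialMod_term _ _ _ _ (phiI_mem lam) (hlmA lam hlm _ _)
      (fun _ => by simpa [StarWord.subst, OpWord.brk, Aw] using i5)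
  · exact trivialMod_term _ _ _ _ (phiI_mem lam) (hlmA lam hlm _ _)
      (fun _ => by simpa [StarWord.subst, OpWord.brk, Aw] using i6)

end Inter

end RotaGS

namespace RotaGS

variable {k : Type} [Field k] {Z : Type}

section Deg

variable (lam : k) {lt : OpWord Z → OpWord Z → Prop} (hmo : IsMonomialOrder lt)
variable (hlm : ∀ u₁ u₂ : OpWord Z,
      IsLeadingMonomial lt (substOPI ![u₁, u₂] (mrbPhi k lam))
        ((OpWord.brk u₁).mul (OpWord.brk u₂)))

lemma interQQ1_id (h2 : (1 : k) + 1 = 0) :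
    mulWordRight (phiI lam (OpWord.one : OpWord Z) .one) (.brkCons .one .one)
      - mulWordLeft (.brkCons .one .one) (phiI lam .one .one) = 0 := by
  rw [mulWordRight_phiI, mulWordLeft_phiI]
  simp only [StarWord.subst, OpWord.brk, Aw, Bw, Cw, Dw, OpWord.brkCons_mul, OpWord.one_mul',
    OpWord.mul_one', OpWord.mul_assoc']
  match_scalars <;>
    first
      | ring1
      | linear_combination h2
      | linear_combination -h2
      | linear_combination lam * h2
      | linear_combination -lam * h2

lemma interQQ2_id (h2 : (1 : k) + 1 = 0) (c : OpWord Z) :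
    mulWordRight (phiI lam (OpWord.one : OpWord Z) .one) (.brkCons c .one)
      - mulWordLeft (.brkCons .one .one) (phiI lam .one c)
    = (1 : k) • StarWord.substF .star (phiI lam .one (.brkCons c .one))
    + (1 : k) • StarWord.substF .star (phiI lam .one (.brkCons .one c))
    + (-1 : k) • (StarWord.brk .star).substF (phiI lam .one c)
    + (1 : k) • (StarWord.brk (.mul .one .star c)).substF (phiI lam .one .one) := by
  rw [mulWordRight_phiI, mulWordLeft_phiI, star_substF, star_substF, substF_phiI, substF_phiI,
    phiI_eq, phiI_eq]
  simp only [StarWord.subst, OpWord.brk, Aw, Bw, Cw, Dw, OpWord.brkCons_mul, OpWord.one_mul',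
    OpWord.mul_one', OpWord.mul_assoc']
  match_scalars <;>
    first
      | ring1
      | linear_combination h2
      | linear_combination -h2
      | linear_combination lam * h2
      | linear_combination -lam * h2

lemma interQQ3_id (h2 : (1 : k) + 1 = 0) (a : OpWord Z) :
    mulWordRight (phiI lam a (OpWord.one : OpWord Z)) (.brkCons .one .one)
      - mulWordLeft (.brkCons a .one) (phiI lam .one .one)
    = (-1 : k) • StarWord.substF .star (phiI lam (a.mul (.brkCons .one .one)) .one)
    + (-1 : k) • StarWord.substF .star (phiI lam (.brkCons a .one) .one)
    + (1 : k) • (StarWord.brk .star).substF (phiI lam a .one)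
    + (-1 : k) • (StarWord.brk (.mul a .star .one)).substF (phiI lam .one .one) := by
  rw [mulWordRight_phiI, mulWordLeft_phiI, star_substF, star_substF, substF_phiI, substF_phiI,
    phiI_eq, phiI_eq]
  simp only [StarWord.subst, OpWord.brk, Aw, Bw, Cw, Dw, OpWord.brkCons_mul, OpWord.one_mul',
    OpWord.mul_one', OpWord.mul_assoc']
  match_scalars <;>
    first
      | ring1
      | linear_combination h2
      | linear_combination -h2
      | linear_combination lam * h2
      | linear_combination -lam * h2

include hmo hlm in
lemma interQQ2_triv (h2 : (1 : k) + 1 = 0) {c : OpWord Z} (hc : c ≠ .one) :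
    TrivialMod lt (SPhi ({mrbPhi k lam} : Set (kM k (Fin 2))) Z)
      (.brkCons .one (.brkCons .one (.brkCons c .one)))
      (mulWordRight (phiI lam (OpWord.one : OpWord Z) .one) (.brkCons c .one)
        - mulWordLeft (.brkCons .one .one) (phiI lam .one c)) := by
  have htr : ∀ {x y z : OpWord Z}, lt x y → lt y z → lt x z :=
    fun hxy hyz => (by haveI := hmo.wellOrder; exact IsTrans.trans _ _ _ hxy hyz)
  have hB1c : lt (Bw (OpWord.one : OpWord Z) c) (Aw .one c) := ltB lam hlm (fun h => hc h.2)
  have hC1c : lt (Cw (OpWord.one : OpWord Z) c) (Aw .one c) := ltC lam hlm (fun h => hc h.2)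
  have j1 : lt (.brkCons .one (.brkCons (.brkCons c .one) .one))
      (.brkCons .one (.brkCons .one (.brkCons c .one)) : OpWord Z) := by
    have := hmo.compat (StarWord.mul (.brkCons .one .one) .star .one) _ _ hB1c
    simpa [StarWord.subst, Aw, Bw] using this
  have j2 : lt (.brkCons .one (.brkCons (.brkCons .one c) .one))
      (.brkCons .one (.brkCons .one (.brkCons c .one)) : OpWord Z) := by
    have := hmo.compat (StarWord.mul (.brkCons .one .one) .star .one) _ _ hC1c
    simpa [StarWord.subst, Aw, Cw] using this
  have j3 : lt (.brkCons (.brkCons .one (.brkCons c .one)) .one)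
      (.brkCons .one (.brkCons .one (.brkCons c .one)) : OpWord Z) := by
    refine htr ?_ j1
    have := ltC lam hlm (u := (OpWord.one : OpWord Z)) (v := .brkCons c .one) (by simp)
    simpa [Aw, Cw] using this
  have j4 : lt (.brkCons (.brkCons .one (.brkCons .one c)) .one)
      (.brkCons .one (.brkCons .one (.brkCons c .one)) : OpWord Z) := by
    refine htr ?_ j2
    have := ltC lam hlm (u := (OpWord.one : OpWord Z)) (v := .brkCons .one c) (by simp)
    simpa [Aw, Cw] using this
  refine trivialMod_congr (interQQ2_id lam h2 c).symm ?_
  refine trivialMod_add (trivialMod_add (trivialMod_add ?_ ?_) ?_) ?_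
  · exact trivialMod_term _ _ _ _ (phiI_mem lam) (hlmA lam hlm _ _)
      (fun _ => by simpa [StarWord.subst, Aw] using j1)
  · exact trivialMod_term _ _ _ _ (phiI_mem lam) (hlmA lam hlm _ _)
      (fun _ => by simpa [StarWord.subst, Aw] using j2)
  · exact trivialMod_term _ _ _ _ (phiI_mem lam) (hlmA lam hlm _ _)
      (fun _ => by simpa [StarWord.subst, OpWord.brk, Aw] using j3)
  · exact trivialMod_term _ _ _ _ (phiI_mem lam) (hlmA lam hlm _ _)
      (fun _ => by simpa [StarWord.subst, OpWord.brk, Aw] using j4)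

include hmo hlm in
lemma interQQ3_triv (h2 : (1 : k) + 1 = 0) {a : OpWord Z} (ha : a ≠ .one) :
    TrivialMod lt (SPhi ({mrbPhi k lam} : Set (kM k (Fin 2))) Z)
      (.brkCons a (.brkCons .one (.brkCons .one .one)))
      (mulWordRight (phiI lam a (OpWord.one : OpWord Z)) (.brkCons .one .one)
        - mulWordLeft (.brkCons a .one) (phiI lam .one .one)) := by
  have htr : ∀ {x y z : OpWord Z}, lt x y → lt y z → lt x z :=
    fun hxy hyz => (by haveI := hmo.wellOrder; exact IsTrans.trans _ _ _ hxy hyz)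
  have hBa : lt (Bw a (OpWord.one : OpWord Z)) (Aw a .one) := ltB lam hlm (fun h => ha h.1)
  have hCa : lt (Cw a (OpWord.one : OpWord Z)) (Aw a .one) := ltC lam hlm (fun h => ha h.1)
  have m1 : lt (.brkCons (a.mul (.brkCons .one .one)) (.brkCons .one .one))
      (.brkCons a (.brkCons .one (.brkCons .one .one)) : OpWord Z) := by
    have := hmo.compat (StarWord.mul .one .star (.brkCons .one .one)) _ _ hBa
    simpa [StarWord.subst, Aw, Bw] using this
  have m2 : lt (.brkCons (.brkCons a .one) (.brkCons .one .one))
      (.brkCons a (.brkCons .one (.brkCons .one .one)) : OpWord Z) := by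
    have := hmo.compat (StarWord.mul .one .star (.brkCons .one .one)) _ _ hCa
    simpa [StarWord.subst, Aw, Cw] using this
  have m3 : lt (.brkCons (.brkCons a (.brkCons .one .one)) .one)
      (.brkCons a (.brkCons .one (.brkCons .one .one)) : OpWord Z) := by
    refine htr ?_ m2
    have := ltB lam hlm (u := (OpWord.brkCons a .one : OpWord Z)) (v := .one) (by simp)
    simpa [Aw, Bw] using this
  have m4 : lt (.brkCons (a.mul (.brkCons .one (.brkCons .one .one))) .one)
      (.brkCons a (.brkCons .one (.brkCons .one .one)) : OpWord Z) := by
    refine htr ?_ m1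
    have := ltB lam hlm (u := a.mul (.brkCons .one .one)) (v := (OpWord.one : OpWord Z)) (by
      rintro ⟨h1, -⟩
      have := (OpWord.mul_eq_one h1).2
      simp at this)
    simpa [Aw, Bw] using this
  refine trivialMod_congr (interQQ3_id lam h2 a).symm ?_
  refine trivialMod_add (trivialMod_add (trivialMod_add ?_ ?_) ?_) ?_
  · exact trivialMod_term _ _ _ _ (phiI_mem lam) (hlmA lam hlm _ _)
      (fun _ => by simpa [StarWord.subst, Aw] using m1)
  · exact trivialMod_term _ _ _ _ (phiI_mem lam) (hlmA lam hlm _ _)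
      (fun _ => by simpa [StarWord.subst, Aw] using m2)
  · exact trivialMod_term _ _ _ _ (phiI_mem lam) (hlmA lam hlm _ _)
      (fun _ => by simpa [StarWord.subst, OpWord.brk, Aw] using m3)
  · exact trivialMod_term _ _ _ _ (phiI_mem lam) (hlmA lam hlm _ _)
      (fun _ => by simpa [StarWord.subst, OpWord.brk, Aw] using m4)

end Deg

end RotaGS

namespace RotaGS

variable {k : Type} [Field k] {Z : Type}

section Incl

variable (lam : k) {lt : OpWord Z → OpWord Z → Prop} (hmo : IsMonomialOrder lt)
variable (hlm : ∀ u₁ u₂ : OpWord Z,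
      IsLeadingMonomial lt (substOPI ![u₁, u₂] (mrbPhi k lam))
        ((OpWord.brk u₁).mul (OpWord.brk u₂)))

lemma incl_left_id (b a' b' : OpWord Z) (p : StarWord Z) :
    phiI lam (p.subst (Aw a' b')) b
      - Finsupp.mapDomain (fun x => OpWord.brkCons (p.subst x) (.brkCons b .one)) (phiI lam a' b')
    = (-1 : k) • (StarWord.brk (.mul .one p (.brkCons b .one))).substF (phiI lam a' b')
    + (-1 : k) • (StarWord.brk (.mul .one (.brk p) b)).substF (phiI lam a' b')
    + (-lam) • (StarWord.mul .one p b).substF (phiI lam a' b')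
    + (1 : k) • StarWord.substF .star (phiI lam (p.subst (Bw a' b')) b)
    + (1 : k) • StarWord.substF .star (phiI lam (p.subst (Cw a' b')) b)
    + lam • StarWord.substF .star (phiI lam (p.subst (Dw a' b')) b) := by
  simp only [star_substF, StarWord.substF, phiI_eq, mapDomain_sub, Finsupp.mapDomain_smul,
    Finsupp.mapDomain_single]
  simp only [StarWord.subst, OpWord.brk, Aw, Bw, Cw, Dw, OpWord.brkCons_mul, OpWord.one_mul',
    OpWord.mul_one', OpWord.mul_assoc']
  module

lemma incl_right_id (a a' b' : OpWord Z) (p : StarWord Z) :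
    phiI lam a (p.subst (Aw a' b'))
      - Finsupp.mapDomain (fun x => OpWord.brkCons a (.brkCons (p.subst x) .one)) (phiI lam a' b')
    = (-1 : k) • (StarWord.brk (.mul a (.brk p) .one)).substF (phiI lam a' b')
    + (-1 : k) • (StarWord.brk (.mul (.brkCons a .one) p .one)).substF (phiI lam a' b')
    + (-lam) • (StarWord.mul a p .one).substF (phiI lam a' b')
    + (1 : k) • StarWord.substF .star (phiI lam a (p.subst (Bw a' b')))
    + (1 : k) • StarWord.substF .star (phiI lam a (p.subst (Cw a' b')))
    + lam • StarWord.substF .star (phiI lam a (p.subst (Dw a' b'))) := by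
  simp only [star_substF, StarWord.substF, phiI_eq, mapDomain_sub, Finsupp.mapDomain_smul,
    Finsupp.mapDomain_single]
  simp only [StarWord.subst, OpWord.brk, Aw, Bw, Cw, Dw, OpWord.brkCons_mul, OpWord.one_mul',
    OpWord.mul_one', OpWord.mul_assoc']
  module

include hmo hlm in
lemma incl_left_triv (b a' b' : OpWord Z) (p : StarWord Z)
    (hB' : lt (Bw a' b') (Aw a' b')) (hC' : lt (Cw a' b') (Aw a' b')) :
    TrivialMod lt (SPhi ({mrbPhi k lam} : Set (kM k (Fin 2))) Z)
      (Aw (p.subst (Aw a' b')) b)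
      (phiI lam (p.subst (Aw a' b')) b
        - Finsupp.mapDomain (fun x => OpWord.brkCons (p.subst x) (.brkCons b .one))
            (phiI lam a' b')) := by
  have haP : p.subst (Aw a' b') ≠ .one := subst_ne_one p (by simp [Aw])
  have o1 : lt (Bw (p.subst (Aw a' b')) b) (Aw (p.subst (Aw a' b')) b) :=
    ltB lam hlm (fun h => haP h.1)
  have o2 : lt (Cw (p.subst (Aw a' b')) b) (Aw (p.subst (Aw a' b')) b) :=
    ltC lam hlm (fun h => haP h.1)
  have o4 : lt (Aw (p.subst (Bw a' b')) b) (Aw (p.subst (Aw a' b')) b) := by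
    have s1 := hmo.compat p _ _ hB'
    have s2 := hmo.compat (StarWord.mul .one (.brk .star) (.brkCons b .one)) _ _ s1
    simpa [StarWord.subst, OpWord.brk, Aw] using s2
  have o5 : lt (Aw (p.subst (Cw a' b')) b) (Aw (p.subst (Aw a' b')) b) := by
    have s1 := hmo.compat p _ _ hC'
    have s2 := hmo.compat (StarWord.mul .one (.brk .star) (.brkCons b .one)) _ _ s1
    simpa [StarWord.subst, OpWord.brk, Aw] using s2
  refine trivialMod_congr (incl_left_id lam b a' b' p).symm ?_
  refine trivialMod_add (trivialMod_add (trivialMod_add (trivialMod_add (trivialMod_add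
    ?_ ?_) ?_) ?_) ?_) ?_
  · exact trivialMod_term _ _ _ _ (phiI_mem lam) (hlmA lam hlm _ _)
      (fun _ => by simpa [StarWord.subst, OpWord.brk, Aw, Bw] using o1)
  · exact trivialMod_term _ _ _ _ (phiI_mem lam) (hlmA lam hlm _ _)
      (fun _ => by simpa [StarWord.subst, OpWord.brk, Aw, Cw] using o2)
  · refine trivialMod_term _ _ _ _ (phiI_mem lam) (hlmA lam hlm _ _) (fun hc => ?_)
    have hlam : lam ≠ 0 := fun h0 => hc (by rw [h0]; ring)
    have := ltD lam hlm (u := p.subst (Aw a' b')) (v := b) hlam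
    simpa [StarWord.subst, Aw, Dw] using this
  · exact trivialMod_term _ _ _ _ (phiI_mem lam) (hlmA lam hlm _ _)
      (fun _ => by simpa [StarWord.subst, Aw] using o4)
  · exact trivialMod_term _ _ _ _ (phiI_mem lam) (hlmA lam hlm _ _)
      (fun _ => by simpa [StarWord.subst, Aw] using o5)
  · refine trivialMod_term _ _ _ _ (phiI_mem lam) (hlmA lam hlm _ _) (fun hc => ?_)
    have hlam : lam ≠ 0 := fun h0 => hc (by rw [h0])
    have s0 := ltD lam hlm (u := a') (v := b') hlam
    have s1 := hmo.compat p _ _ s0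
    have s2 := hmo.compat (StarWord.mul .one (.brk .star) (.brkCons b .one)) _ _ s1
    simpa [StarWord.subst, OpWord.brk, Aw] using s2

include hmo hlm in
lemma incl_right_triv (a a' b' : OpWord Z) (p : StarWord Z)
    (hB' : lt (Bw a' b') (Aw a' b')) (hC' : lt (Cw a' b') (Aw a' b')) :
    TrivialMod lt (SPhi ({mrbPhi k lam} : Set (kM k (Fin 2))) Z)
      (Aw a (p.subst (Aw a' b')))
      (phiI lam a (p.subst (Aw a' b'))
        - Finsupp.mapDomain (fun x => OpWord.brkCons a (.brkCons (p.subst x) .one))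
            (phiI lam a' b')) := by
  have haP : p.subst (Aw a' b') ≠ .one := subst_ne_one p (by simp [Aw])
  have o1 : lt (Bw a (p.subst (Aw a' b'))) (Aw a (p.subst (Aw a' b'))) :=
    ltB lam hlm (fun h => haP h.2)
  have o2 : lt (Cw a (p.subst (Aw a' b'))) (Aw a (p.subst (Aw a' b'))) :=
    ltC lam hlm (fun h => haP h.2)
  have o4 : lt (Aw a (p.subst (Bw a' b'))) (Aw a (p.subst (Aw a' b'))) := by
    have s1 := hmo.compat p _ _ hB'
    have s2 := hmo.compat (StarWord.mul (.brkCons a .one) (.brk .star) .one) _ _ s1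
    simpa [StarWord.subst, OpWord.brk, Aw] using s2
  have o5 : lt (Aw a (p.subst (Cw a' b'))) (Aw a (p.subst (Aw a' b'))) := by
    have s1 := hmo.compat p _ _ hC'
    have s2 := hmo.compat (StarWord.mul (.brkCons a .one) (.brk .star) .one) _ _ s1
    simpa [StarWord.subst, OpWord.brk, Aw] using s2
  refine trivialMod_congr (incl_right_id lam a a' b' p).symm ?_
  refine trivialMod_add (trivialMod_add (trivialMod_add (trivialMod_add (trivialMod_add
    ?_ ?_) ?_) ?_) ?_) ?_
  · exact trivialMod_term _ _ _ _ (phiI_mem lam) (hlmA lam hlm _ _)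
      (fun _ => by simpa [StarWord.subst, OpWord.brk, Aw, Bw] using o1)
  · exact trivialMod_term _ _ _ _ (phiI_mem lam) (hlmA lam hlm _ _)
      (fun _ => by simpa [StarWord.subst, OpWord.brk, Aw, Cw] using o2)
  · refine trivialMod_term _ _ _ _ (phiI_mem lam) (hlmA lam hlm _ _) (fun hc => ?_)
    have hlam : lam ≠ 0 := fun h0 => hc (by rw [h0]; ring)
    have := ltD lam hlm (u := a) (v := p.subst (Aw a' b')) hlam
    simpa [StarWord.subst, Aw, Dw] using this
  · exact trivialMod_term _ _ _ _ (phiI_mem lam) (hlmA lam hlm _ _)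
      (fun _ => by simpa [StarWord.subst, Aw] using o4)
  · exact trivialMod_term _ _ _ _ (phiI_mem lam) (hlmA lam hlm _ _)
      (fun _ => by simpa [StarWord.subst, Aw] using o5)
  · refine trivialMod_term _ _ _ _ (phiI_mem lam) (hlmA lam hlm _ _) (fun hc => ?_)
    have hlam : lam ≠ 0 := fun h0 => hc (by rw [h0])
    have s0 := ltD lam hlm (u := a') (v := b') hlam
    have s1 := hmo.compat p _ _ s0
    have s2 := hmo.compat (StarWord.mul (.brkCons a .one) (.brk .star) .one) _ _ s1
    simpa [StarWord.subst, OpWord.brk, Aw] using s2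

end Incl

end RotaGS

namespace RotaGS

variable {k : Type} [Field k] {Z : Type}

section InclQ

variable (lam : k) {lt : OpWord Z → OpWord Z → Prop} (hmo : IsMonomialOrder lt)
variable (hlm : ∀ u₁ u₂ : OpWord Z,
      IsLeadingMonomial lt (substOPI ![u₁, u₂] (mrbPhi k lam))
        ((OpWord.brk u₁).mul (OpWord.brk u₂)))

lemma incl_left_Qid (h2 : (1 : k) + 1 = 0) (b : OpWord Z) (p : StarWord Z) :
    phiI lam (p.subst (Aw .one .one)) b
      - Finsupp.mapDomain (fun x => OpWord.brkCons (p.subst x) (.brkCons b .one))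
          (phiI lam .one .one)
    = (-1 : k) • (StarWord.brk (.mul .one p (.brkCons b .one))).substF (phiI lam .one .one)
    + (-1 : k) • (StarWord.brk (.mul .one (.brk p) b)).substF (phiI lam .one .one)
    + (-lam) • (StarWord.mul .one p b).substF (phiI lam .one .one)
    + lam • StarWord.substF .star (phiI lam (p.subst (Dw .one .one)) b) := by
  simp only [star_substF, StarWord.substF, phiI_eq, mapDomain_sub, Finsupp.mapDomain_smul,
    Finsupp.mapDomain_single]
  simp only [StarWord.subst, OpWord.brk, Aw, Bw, Cw, Dw, OpWord.brkCons_mul, OpWord.one_mul',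
    OpWord.mul_one', OpWord.mul_assoc']
  match_scalars <;>
    first
      | ring1
      | linear_combination h2
      | linear_combination -h2
      | linear_combination lam * h2
      | linear_combination -lam * h2

lemma incl_right_Qid (h2 : (1 : k) + 1 = 0) (a : OpWord Z) (p : StarWord Z) :
    phiI lam a (p.subst (Aw .one .one))
      - Finsupp.mapDomain (fun x => OpWord.brkCons a (.brkCons (p.subst x) .one))
          (phiI lam .one .one)
    = (-1 : k) • (StarWord.brk (.mul a (.brk p) .one)).substF (phiI lam .one .one)
    + (-1 : k) • (StarWord.brk (.mul (.brkCons a .one) p .one)).substF (phiI lam .one .one)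
    + (-lam) • (StarWord.mul a p .one).substF (phiI lam .one .one)
    + lam • StarWord.substF .star (phiI lam a (p.subst (Dw .one .one))) := by
  simp only [star_substF, StarWord.substF, phiI_eq, mapDomain_sub, Finsupp.mapDomain_smul,
    Finsupp.mapDomain_single]
  simp only [StarWord.subst, OpWord.brk, Aw, Bw, Cw, Dw, OpWord.brkCons_mul, OpWord.one_mul',
    OpWord.mul_one', OpWord.mul_assoc']
  match_scalars <;>
    first
      | ring1
      | linear_combination h2
      | linear_combination -h2
      | linear_combination lam * h2
      | linear_combination -lam * h2

include hmo hlm in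
lemma incl_left_trivQ (h2 : (1 : k) + 1 = 0) (b : OpWord Z) (p : StarWord Z) :
    TrivialMod lt (SPhi ({mrbPhi k lam} : Set (kM k (Fin 2))) Z)
      (Aw (p.subst (Aw .one .one)) b)
      (phiI lam (p.subst (Aw .one .one)) b
        - Finsupp.mapDomain (fun x => OpWord.brkCons (p.subst x) (.brkCons b .one))
            (phiI lam .one .one)) := by
  have haP : p.subst (Aw (OpWord.one : OpWord Z) .one) ≠ .one := subst_ne_one p (by simp [Aw])
  have o1 : lt (Bw (p.subst (Aw (OpWord.one : OpWord Z) .one)) b)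
      (Aw (p.subst (Aw (OpWord.one : OpWord Z) .one)) b) := ltB lam hlm (fun h => haP h.1)
  have o2 : lt (Cw (p.subst (Aw (OpWord.one : OpWord Z) .one)) b)
      (Aw (p.subst (Aw (OpWord.one : OpWord Z) .one)) b) := ltC lam hlm (fun h => haP h.1)
  refine trivialMod_congr (incl_left_Qid lam h2 b p).symm ?_
  refine trivialMod_add (trivialMod_add (trivialMod_add ?_ ?_) ?_) ?_
  · exact trivialMod_term _ _ _ _ (phiI_mem lam) (hlmA lam hlm _ _)
      (fun _ => by simpa [StarWord.subst, OpWord.brk, Aw, Bw] using o1)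
  · exact trivialMod_term _ _ _ _ (phiI_mem lam) (hlmA lam hlm _ _)
      (fun _ => by simpa [StarWord.subst, OpWord.brk, Aw, Cw] using o2)
  · refine trivialMod_term _ _ _ _ (phiI_mem lam) (hlmA lam hlm _ _) (fun hc => ?_)
    have hlam : lam ≠ 0 := fun h0 => hc (by rw [h0]; ring)
    have := ltD lam hlm (u := p.subst (Aw (OpWord.one : OpWord Z) .one)) (v := b) hlam
    simpa [StarWord.subst, Aw, Dw] using this
  · refine trivialMod_term _ _ _ _ (phiI_mem lam) (hlmA lam hlm _ _) (fun hc => ?_)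
    have hlam : lam ≠ 0 := fun h0 => hc (by rw [h0])
    have s0 := ltD lam hlm (u := (OpWord.one : OpWord Z)) (v := .one) hlam
    have s1 := hmo.compat p _ _ s0
    have s2 := hmo.compat (StarWord.mul .one (.brk .star) (.brkCons b .one)) _ _ s1
    simpa [StarWord.subst, OpWord.brk, Aw] using s2

include hmo hlm in
lemma incl_right_trivQ (h2 : (1 : k) + 1 = 0) (a : OpWord Z) (p : StarWord Z) :
    TrivialMod lt (SPhi ({mrbPhi k lam} : Set (kM k (Fin 2))) Z)
      (Aw a (p.subst (Aw .one .one)))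
      (phiI lam a (p.subst (Aw .one .one))
        - Finsupp.mapDomain (fun x => OpWord.brkCons a (.brkCons (p.subst x) .one))
            (phiI lam .one .one)) := by
  have haP : p.subst (Aw (OpWord.one : OpWord Z) .one) ≠ .one := subst_ne_one p (by simp [Aw])
  have o1 : lt (Bw a (p.subst (Aw (OpWord.one : OpWord Z) .one)))
      (Aw a (p.subst (Aw (OpWord.one : OpWord Z) .one))) := ltB lam hlm (fun h => haP h.2)
  have o2 : lt (Cw a (p.subst (Aw (OpWord.one : OpWord Z) .one)))
      (Aw a (p.subst (Aw (OpWord.one : OpWord Z) .one))) := ltC lam hlm (fun h => haP h.2)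
  refine trivialMod_congr (incl_right_Qid lam h2 a p).symm ?_
  refine trivialMod_add (trivialMod_add (trivialMod_add ?_ ?_) ?_) ?_
  · exact trivialMod_term _ _ _ _ (phiI_mem lam) (hlmA lam hlm _ _)
      (fun _ => by simpa [StarWord.subst, OpWord.brk, Aw, Bw] using o1)
  · exact trivialMod_term _ _ _ _ (phiI_mem lam) (hlmA lam hlm _ _)
      (fun _ => by simpa [StarWord.subst, OpWord.brk, Aw, Cw] using o2)
  · refine trivialMod_term _ _ _ _ (phiI_mem lam) (hlmA lam hlm _ _) (fun hc => ?_)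
    have hlam : lam ≠ 0 := fun h0 => hc (by rw [h0]; ring)
    have := ltD lam hlm (u := a) (v := p.subst (Aw (OpWord.one : OpWord Z) .one)) hlam
    simpa [StarWord.subst, Aw, Dw] using this
  · refine trivialMod_term _ _ _ _ (phiI_mem lam) (hlmA lam hlm _ _) (fun hc => ?_)
    have hlam : lam ≠ 0 := fun h0 => hc (by rw [h0])
    have s0 := ltD lam hlm (u := (OpWord.one : OpWord Z)) (v := .one) hlam
    have s1 := hmo.compat p _ _ s0
    have s2 := hmo.compat (StarWord.mul (.brkCons a .one) (.brk .star) .one) _ _ s1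
    simpa [StarWord.subst, OpWord.brk, Aw] using s2

end InclQ

end RotaGS

namespace RotaGS

variable {k : Type} [Field k]

theorem mainGS (lam : k) (Z : Type) (lt : OpWord Z → OpWord Z → Prop)
    (hmo : IsMonomialOrder lt)
    (hlm : ∀ u₁ u₂ : OpWord Z,
      IsLeadingMonomial lt (substOPI ![u₁, u₂] (mrbPhi k lam))
        ((OpWord.brk u₁).mul (OpWord.brk u₂))) :
    IsGSBasis lt (SPhi ({mrbPhi k lam} : Set (kM k (Fin 2))) Z) := by
  constructor
  · -- intersection compositions
    intro f hf g hg wf wg u v w hwf hwg hw1 hw2 hb1 hb2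
    rw [monic_eq lam hmo hlm] at hf hg
    obtain ⟨a, b, rfl⟩ := (mem_SPhi_iff lam).1 hf
    obtain ⟨b2, c, rfl⟩ := (mem_SPhi_iff lam).1 hg
    have hwfA : wf = Aw a b := lm_unique hmo hwf (hlmA lam hlm a b)
    have hwgA : wg = Aw b2 c := lm_unique hmo hwg (hlmA lam hlm b2 c)
    subst hwfA hwgA hw1
    rw [monic_eq lam hmo hlm]
    -- breadth: u and v have breadth 1
    have hbu : u.breadth = 1 := by
      simp only [Aw, OpWord.breadth_mul, OpWord.breadth] at hb1 hb2
      omega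
    have hbv : v.breadth = 1 := by
      have := congrArg OpWord.breadth hw2
      simp only [Aw, OpWord.breadth_mul, OpWord.breadth] at this hbu
      omega
    -- analyze v
    cases v with
    | one => simp [OpWord.breadth] at hbv
    | var z v0 =>
        exfalso
        rw [Aw] at hw2
        simp only [OpWord.brkCons_mul, OpWord.var_mul] at hw2
        cases hw2
    | brkCons x v0 =>
        have hv0 : v0 = OpWord.one := by
          apply OpWord.eq_one_of_breadth_eq_zero
          simp [OpWord.breadth] at hbv
          omega
        subst hv0
        rw [Aw, Aw] at hw2
        simp only [OpWord.brkCons_mul, OpWord.one_mul'] at hw2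
        injection hw2 with e1 e2
        injection e2 with e3 e4
        subst e1 e3 e4
        have hwform : (Aw a b).mul (OpWord.brkCons c .one)
            = OpWord.brkCons a (.brkCons b (.brkCons c .one)) := by
          simp [Aw]
        rw [hwform]
        by_cases hP : lt (Bw (OpWord.one : OpWord Z) .one) (Aw .one .one)
        · exact interGeneric_triv lam hmo hlm a b c (ltB2 lam hlm hP) (ltC2 lam hlm hP)
            (ltB2 lam hlm hP) (ltC2 lam hlm hP)
        · have h2 : (1 : k) + 1 = 0 := by
            by_contra h2n
            refine hP ((hlmA lam hlm .one .one).2 _ ?_ (ne_BA _ _))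
            rw [Finsupp.mem_support_iff, phiI_apply_B11]
            exact neg_ne_zero.2 h2n
          by_cases hab : a = OpWord.one ∧ b = OpWord.one
          · obtain ⟨rfl, rfl⟩ := hab
            by_cases hc : c = OpWord.one
            · subst hc
              exact trivialMod_congr (interQQ1_id lam h2).symm trivialMod_zero
            · exact interQQ2_triv lam hmo hlm h2 hc
          · by_cases hbc : b = OpWord.one ∧ c = OpWord.one
            · obtain ⟨rfl, rfl⟩ := hbc
              exact interQQ3_triv lam hmo hlm h2 (fun h => hab ⟨h, rfl⟩)
            · exact interGeneric_triv lam hmo hlm a b c (ltB lam hlm hab) (ltC lam hlm hab)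
                (ltB lam hlm hbc) (ltC lam hlm hbc)
  · -- including compositions
    intro f hf g hg wf wg q hwf hwg hq
    rw [monic_eq lam hmo hlm] at hf hg
    obtain ⟨a, b, rfl⟩ := (mem_SPhi_iff lam).1 hf
    obtain ⟨a', b', rfl⟩ := (mem_SPhi_iff lam).1 hg
    have hwfA : wf = Aw a b := lm_unique hmo hwf (hlmA lam hlm a b)
    have hwgA : wg = Aw a' b' := lm_unique hmo hwg (hlmA lam hlm a' b')
    subst hwfA hwgA
    rw [monic_eq lam hmo hlm]
    have hq' : q.subst (OpWord.brkCons a' (.brkCons b' .one))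
        = OpWord.brkCons a (.brkCons b .one) := by
      rw [show (OpWord.brkCons a' (.brkCons b' .one)) = Aw a' b' from rfl, ← hq, Aw]
    rcases position (msize q) q le_rfl a b a' b' .one hq' with hid | ⟨p, hp⟩ | ⟨p, hp⟩
    · -- identity context
      have hW : Aw a b = Aw a' b' := by rw [hq, hid (Aw a' b')]
      rw [Aw, Aw] at hW
      injection hW with e1 e2
      injection e2 with e3 e4
      subst e1 e3
      have hsub : q.substF (phiI lam a b) = phiI lam a b := by
        rw [StarWord.substF, show q.subst = id from funext hid, Finsupp.mapDomain_id]
      rw [hsub, sub_self]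
      exact trivialMod_zero
    · -- star inside the first slot
      have hpa : p.subst (Aw a' b') = a := by
        have := (hp (Aw a' b')).symm.trans hq'
        injection this
      have hsub : q.substF (phiI lam a' b')
          = Finsupp.mapDomain (fun x => OpWord.brkCons (p.subst x) (.brkCons b .one))
              (phiI lam a' b') := by
        rw [StarWord.substF, funext hp]
      rw [hsub, ← hpa]
      by_cases hP : lt (Bw (OpWord.one : OpWord Z) .one) (Aw .one .one)
      · exact incl_left_triv lam hmo hlm b a' b' p (ltB2 lam hlm hP) (ltC2 lam hlm hP)
      · have h2 : (1 : k) + 1 = 0 := by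
          by_contra h2n
          refine hP ((hlmA lam hlm .one .one).2 _ ?_ (ne_BA _ _))
          rw [Finsupp.mem_support_iff, phiI_apply_B11]
          exact neg_ne_zero.2 h2n
        by_cases hab' : a' = OpWord.one ∧ b' = OpWord.one
        · obtain ⟨rfl, rfl⟩ := hab'
          exact incl_left_trivQ lam hmo hlm h2 b p
        · exact incl_left_triv lam hmo hlm b a' b' p (ltB lam hlm hab') (ltC lam hlm hab')
    · -- star inside the second slot
      have hpb : p.subst (Aw a' b') = b := by
        have := (hp (Aw a' b')).symm.trans hq'
        injection this with f1 f2
        injection f2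
      have hsub : q.substF (phiI lam a' b')
          = Finsupp.mapDomain (fun x => OpWord.brkCons a (.brkCons (p.subst x) .one))
              (phiI lam a' b') := by
        rw [StarWord.substF, funext hp]
      rw [hsub, ← hpb]
      by_cases hP : lt (Bw (OpWord.one : OpWord Z) .one) (Aw .one .one)
      · exact incl_right_triv lam hmo hlm a a' b' p (ltB2 lam hlm hP) (ltC2 lam hlm hP)
      · have h2 : (1 : k) + 1 = 0 := by
          by_contra h2n
          refine hP ((hlmA lam hlm .one .one).2 _ ?_ (ne_BA _ _))
          rw [Finsupp.mem_support_iff, phiI_apply_B11]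
          exact neg_ne_zero.2 h2n
        by_cases hab' : a' = OpWord.one ∧ b' = OpWord.one
        · obtain ⟨rfl, rfl⟩ := hab'
          exact incl_right_trivQ lam hmo hlm h2 a p
        · exact incl_right_triv lam hmo hlm a a' b' p (ltB lam hlm hab') (ltC lam hlm hab')

end RotaGS

namespace RotaGS

/-- Let `λ ∈ k` and `φ` be the modified Rota–Baxter OPI of
weight `λ`. Let `Z` be a set and `≤` a monomial order on `M(Z)` such that
`lm(φ(u₁,u₂)) = ⌊u₁⌋⌊u₂⌋` for all `u₁, u₂ ∈ M(Z)`. Then `S_φ(Z)` is a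
Gröbner–Shirshov basis in `kM(Z)` with respect to `≤`; hence, whenever such a
monomial order exists for every set `Z`, the modified Rota–Baxter OPI is
Gröbner–Shirshov. -/
theorem mrb_GS (k : Type) [Field k] (lam : k) (Z : Type)
    (lt : OpWord Z → OpWord Z → Prop) (h : IsMonomialOrder lt)
    (hlm : ∀ u₁ u₂ : OpWord Z,
      IsLeadingMonomial lt (substOPI ![u₁, u₂] (mrbPhi k lam))
        ((OpWord.brk u₁).mul (OpWord.brk u₂))) :
    IsGSBasis lt (SPhi ({mrbPhi k lam} : Set (kM k (Fin 2))) Z) ∧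
    ((∀ Z' : Type, ∃ lt' : OpWord Z' → OpWord Z' → Prop, IsMonomialOrder lt' ∧
        ∀ u₁ u₂ : OpWord Z',
          IsLeadingMonomial lt' (substOPI ![u₁, u₂] (mrbPhi k lam))
            ((OpWord.brk u₁).mul (OpWord.brk u₂))) →
      GSOPI ({mrbPhi k lam} : Set (kM k (Fin 2)))) := by
  refine ⟨mainGS lam Z lt h hlm, fun hall Z' => ?_⟩
  obtain ⟨lt', h1, h2⟩ := hall Z'
  exact ⟨lt', h1, mainGS lam Z' lt' h1 h2⟩

end RotaGS
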